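/- For the 3-leaf Brownian motion tree model with clade {1,2}, the quantity (p03·p12 − p01·p23)·det(Σ) equals θ4, the length of the inner edge. -/

import Mathlib

theorem stmt_4 (θ1 θ2 θ3 θ4 θ5 : ℝ)
    (S : Matrix (Fin 3) (Fin 3) ℝ)
    (hS : S = !![θ1 + θ4 + θ5, θ4 + θ5, θ5;
                 θ4 + θ5, θ2 + θ4 + θ5, θ5;
                 θ5, θ5, θ3 + θ5])
    (hdet : S.det ≠ 0) (K : Matrix (Fin 3) (Fin 3) ℝ) (hK : K = S⁻¹) :
    ((K 2 0 + K 2 1 + K 2 2) * (-(K 0 1)) -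
      (K 0 0 + K 0 1 + K 0 2) * (-(K 1 2))) * S.det = θ4 := by
  have hd : S.det = S.det := rfl
  subst hK
  rw [Matrix.inv_def]
  subst hS
  simp [Matrix.adjugate_fin_three, Matrix.det_fin_three, Matrix.smul_apply] at *
  generalize hD : (θ1 + θ4 + θ5) * (θ2 + θ4 + θ5) * (θ3 + θ5) - (θ1 + θ4 + θ5) * θ5 * θ5 -
      (θ4 + θ5) * (θ4 + θ5) * (θ3 + θ5) + (θ4 + θ5) * θ5 * θ5 + θ5 * (θ4 + θ5) * θ5 -
      θ5 * (θ2 + θ4 + θ5) * θ5 = D at hdet ⊢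
  field_simp
  subst hD
  ring
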